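/- Let a, b and n > 1 be positive integers, set a_m = r_b(n) + a·r_b(m-1) for 1 ≤ m ≤ n. Let L be the (n-1)×n integer matrix whose rows are: for 1 ≤ m ≤ n-2, the row b·e_m − (b+1)·e_{m+1} + e_{m+2}, and the last row (a+1)·e_1 + b·e_{n-1} − (b+1)·e_n. Then for every m ∈ {1,…,n}, the absolute value of the determinant of the (n-1)×(n-1) matrix obtained from L by deleting column m equals a_m; in particular, the set of absolute values of the maximal minors of L is {a_1, …, a_n}. -/

import Mathlib

/-- The ℓ-th repunit in base `b`: `r_b(ℓ) = ∑_{j=0}^{ℓ-1} b^j`, with `r_b(0) = 0`. -/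
def rep (b ℓ : ℕ) : ℕ := ∑ j ∈ Finset.range ℓ, b ^ j

/-- `a_m = r_b(n) + a · r_b(m-1)`. -/
def aseq (a b n m : ℕ) : ℕ := rep b n + a * rep b (m - 1)

/-- The `m`-th (1-indexed) standard basis vector of `ℤ^n`. -/
def eZ (n m : ℕ) : Fin n → ℤ := fun j => if (j : ℕ) + 1 = m then 1 else 0

/-- The `(n-1)×n` matrix `L`: for `1 ≤ m ≤ n-2` the `m`-th row is
`b·e_m − (b+1)·e_{m+1} + e_{m+2}`, and the last row is `(a+1)·e_1 + b·e_{n-1} − (b+1)·e_n`. -/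
def Lmat (a b n : ℕ) : Matrix (Fin (n - 1)) (Fin n) ℤ :=
  Matrix.of fun r =>
    if (r : ℕ) + 1 ≤ n - 2 then
      (b : ℤ) • eZ n ((r : ℕ) + 1) - ((b : ℤ) + 1) • eZ n ((r : ℕ) + 2) + eZ n ((r : ℕ) + 3)
    else
      ((a : ℤ) + 1) • eZ n 1 + (b : ℤ) • eZ n (n - 1) - ((b : ℤ) + 1) • eZ n n

/-- The strictly monotone embedding `Fin (n-1) → Fin n` avoiding `m`; composing with it
deletes the column `m`. -/
def delCol (n : ℕ) (m : Fin n) (j : Fin (n - 1)) : Fin n :=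
  if h : (j : ℕ) < (m : ℕ) then ⟨j, lt_trans h m.isLt⟩
  else ⟨(j : ℕ) + 1, by have := j.isLt; omega⟩

section Aux

lemma rep_succ (b t : ℕ) : rep b (t+1) = b * rep b t + 1 := by
  simp [rep, geom_sum_succ]
lemma rep_succ' (b t : ℕ) : rep b (t+1) = rep b t + b^t := by
  simp [rep, Finset.sum_range_succ]
lemma rep_add (b m t : ℕ) : rep b (m+t) = rep b m + b^m * rep b t := by
  induction t with
  | zero => simp [rep]
  | succ t ih => rw [← add_assoc, rep_succ', ih, rep_succ', pow_add]; ring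
lemma rep_one (b : ℕ) : rep b 1 = 1 := by simp [rep]
lemma rep_two (b : ℕ) : rep b 2 = b + 1 := by simp [rep, Finset.sum_range_succ]; omega

def vent (b n j k : ℕ) : ℤ :=
  if j ≤ k then (rep b (n - k) : ℤ) else (b:ℤ)^(j-k) * (rep b (n - j) : ℤ)

lemma vent_ge (b n j k : ℕ) (h : k ≤ j) : vent b n j k = (b:ℤ)^(j-k) * (rep b (n - j) : ℤ) := by
  unfold vent
  by_cases h2 : j ≤ k
  · have : j = k := le_antisymm h2 h
    subst this
    simp
  · rw [if_neg h2]

def Vm (b n : ℕ) : Matrix (Fin n) (Fin n) ℤ :=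
  Matrix.of fun j k => vent b n (j:ℕ) (k:ℕ)

lemma sum_tail (b c k n : ℕ) (hc : k ≤ c) :
    ∑ l ∈ Finset.range n, (if c ≤ l then (b:ℤ)^(l-k) else 0)
      = (b:ℤ)^(c-k) * (rep b (n - c) : ℤ) := by
  induction n with
  | zero => simp [rep]
  | succ n ih =>
    rw [Finset.sum_range_succ, ih]
    by_cases h : c ≤ n
    · rw [if_pos h]
      have h1 : n + 1 - c = (n - c) + 1 := by omega
      rw [h1, rep_succ']
      push_cast
      rw [mul_add, ← pow_add]
      congr 2
      omega
    · rw [if_neg h]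
      have h1 : n + 1 - c = n - c := by omega
      rw [h1, add_zero]

lemma sum_UW (b n j k : ℕ) :
    ∑ l ∈ Finset.range n, ((if j ≤ l then (1:ℤ) else 0) * (if k ≤ l then (b:ℤ)^(l-k) else 0))
      = vent b n j k := by
  by_cases hjk : j ≤ k
  · have : ∀ l, ((if j ≤ l then (1:ℤ) else 0) * (if k ≤ l then (b:ℤ)^(l-k) else 0))
        = (if k ≤ l then (b:ℤ)^(l-k) else 0) := by
      intro l
      by_cases h1 : j ≤ l <;> by_cases h2 : k ≤ l <;> simp [h1, h2] <;> omega
    rw [Finset.sum_congr rfl fun l _ => this l, sum_tail b k k n le_rfl]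
    simp [vent, hjk]
  · have : ∀ l, ((if j ≤ l then (1:ℤ) else 0) * (if k ≤ l then (b:ℤ)^(l-k) else 0))
        = (if j ≤ l then (b:ℤ)^(l-k) else 0) := by
      intro l
      by_cases h1 : j ≤ l <;> by_cases h2 : k ≤ l <;> simp [h1, h2] <;> omega
    rw [Finset.sum_congr rfl fun l _ => this l, sum_tail b j k n (by omega)]
    simp [vent, hjk]

def Um (n : ℕ) : Matrix (Fin n) (Fin n) ℤ :=
  Matrix.of fun j k => if (j:ℕ) ≤ (k:ℕ) then 1 else 0
def Wm (b n : ℕ) : Matrix (Fin n) (Fin n) ℤ :=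
  Matrix.of fun j k => if (k:ℕ) ≤ (j:ℕ) then (b:ℤ)^((j:ℕ)-(k:ℕ)) else 0

lemma Um_mul_Wm (b n : ℕ) : Um n * Wm b n = Vm b n := by
  ext j k
  rw [Matrix.mul_apply]
  show ∑ l : Fin n, ((if (j:ℕ) ≤ (l:ℕ) then (1:ℤ) else 0) *
      (if (k:ℕ) ≤ (l:ℕ) then (b:ℤ)^((l:ℕ)-(k:ℕ)) else 0)) = vent b n (j:ℕ) (k:ℕ)
  rw [Fin.sum_univ_eq_sum_range (fun l => (if (j:ℕ) ≤ l then (1:ℤ) else 0) *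
      (if (k:ℕ) ≤ l then (b:ℤ)^(l-(k:ℕ)) else 0))]
  exact sum_UW b n j k

lemma det_Vm (b n : ℕ) : (Vm b n).det = 1 := by
  rw [← Um_mul_Wm, Matrix.det_mul]
  have h1 : (Um n).det = 1 := by
    rw [Matrix.det_of_upperTriangular]
    · refine Finset.prod_eq_one fun i _ => by simp [Um]
    · intro i j hij
      have : (j:ℕ) < (i:ℕ) := hij
      simp only [Um, Matrix.of_apply]
      rw [if_neg (by omega)]
  have h2 : (Wm b n).det = 1 := by
    rw [Matrix.det_of_lowerTriangular]
    · refine Finset.prod_eq_one fun i _ => by simp [Wm]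
    · intro i j hij
      have : (i:ℕ) < (j:ℕ) := hij
      simp only [Wm, Matrix.of_apply]
      rw [if_neg (by omega)]
  rw [h1, h2, mul_one]

lemma key_mid (b n r K : ℕ) (hr : r + 3 ≤ n) (hK : K < n) :
    b * vent b n r K - (b+1) * vent b n (r+1) K + vent b n (r+2) K
      = if K = r + 1 then -1 else 0 := by
  rcases lt_trichotomy K (r+1) with h | h | h
  · have hK' : K ≤ r := by omega
    rw [if_neg (by omega)]
    obtain ⟨e, he⟩ : ∃ e, r = K + e := ⟨r - K, by omega⟩
    obtain ⟨s, hs⟩ : ∃ s, n = r + 3 + s := ⟨n - (r+3), by omega⟩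
    subst he hs
    rw [vent_ge _ _ _ _ (by omega)]
    simp only [vent]
    rw [if_neg (by omega), if_neg (by omega)]
    have e1 : K + e + 3 + s - (K + e) = s + 3 := by omega
    have e2 : K + e + 3 + s - (K + e + 1) = s + 2 := by omega
    have e3 : K + e + 3 + s - (K + e + 2) = s + 1 := by omega
    have e4 : K + e - K = e := by omega
    have e5 : K + e + 1 - K = e + 1 := by omega
    have e6 : K + e + 2 - K = e + 2 := by omega
    rw [e1, e2, e3, e4, e5, e6]
    rw [show s + 3 = (s+1) + 1 + 1 by ring, rep_succ, rep_succ b (s+1)]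
    push_cast
    ring
  · subst h
    rw [if_pos rfl]
    simp only [vent]
    rw [if_pos (by omega), if_pos (by omega), if_neg (by omega)]
    have e1 : n - (r + 1) = (n - (r+2)) + 1 := by omega
    have e2 : r + 2 - (r + 1) = 1 := by omega
    rw [e1, e2, rep_succ]
    push_cast
    ring
  · rw [if_neg (by omega)]
    simp only [vent]
    rw [if_pos (by omega), if_pos (by omega), if_pos (by omega)]
    ring

lemma key_last (a b n K : ℕ) (hn : 2 ≤ n) (hK : K < n) :
    (a+1) * vent b n 0 K + b * vent b n (n-2) K - (b+1) * vent b n (n-1) K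
      = (a+1) * (rep b (n-K) : ℤ) - if K = n-1 then 1 else 0 := by
  rcases lt_trichotomy K (n-2) with h | h | h
  · rw [if_neg (by omega)]
    simp only [vent]
    rw [if_pos (by omega), if_neg (by omega), if_neg (by omega)]
    obtain ⟨e, he⟩ : ∃ e, n = K + e + 3 := ⟨n - K - 3, by omega⟩
    subst he
    have e1 : K + e + 3 - (K + e + 3 - 2) = 2 := by omega
    have e2 : K + e + 3 - (K + e + 3 - 1) = 1 := by omega
    have e3 : K + e + 3 - 2 - K = e + 1 := by omega
    have e4 : K + e + 3 - 1 - K = e + 2 := by omega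
    rw [e1, e2, e3, e4, rep_one, rep_two]
    push_cast
    ring
  · subst h
    rw [if_neg (by omega)]
    simp only [vent]
    rw [if_pos (by omega), if_pos (by omega), if_neg (by omega)]
    have e0 : n - (n - 2) = 2 := by omega
    have e1 : n - 1 - (n - 2) = 1 := by omega
    have e2 : n - (n - 1) = 1 := by omega
    rw [e0, e1, e2, rep_one, rep_two]
    push_cast
    ring
  · have h' : K = n - 1 := by omega
    subst h'
    rw [if_pos rfl]
    simp only [vent]
    rw [if_pos (by omega), if_pos (by omega), if_pos (by omega)]
    have e2 : n - (n - 1) = 1 := by omega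
    rw [e2, rep_one]
    push_cast
    ring

lemma sum_eZ_mul (n c : ℕ) (h1 : 1 ≤ c) (h2 : c ≤ n) (f : Fin n → ℤ) :
    ∑ j : Fin n, eZ n c j * f j = f ⟨c-1, by omega⟩ := by
  rw [Finset.sum_eq_single (⟨c-1, by omega⟩ : Fin n)]
  · show (if (c-1) + 1 = c then (1:ℤ) else 0) * _ = _
    rw [if_pos (by omega), one_mul]
  · intro j _ hj
    have hne : (j:ℕ) + 1 ≠ c := by
      intro hc
      apply hj
      apply Fin.ext
      show (j:ℕ) = c - 1
      omega
    show (if (j:ℕ) + 1 = c then (1:ℤ) else 0) * _ = 0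
    rw [if_neg hne, zero_mul]
  · intro h
    exact absurd (Finset.mem_univ _) h

end Aux
section Aux2

def Nm (a b k : ℕ) (m : Fin (k+2)) : Matrix (Fin (k+2)) (Fin (k+2)) ℤ :=
  Matrix.of fun i k' =>
    if (i:ℕ) = 0 then eZ (k+2) ((m:ℕ)+1) k'
    else Lmat a b (k+2) ⟨(i:ℕ)-1, by have := i.isLt; omega⟩ k'

def Pm (a b k : ℕ) (m : Fin (k+2)) : Matrix (Fin (k+2)) (Fin (k+2)) ℤ :=
  Matrix.of fun i k' =>
    if (i:ℕ) = 0 then vent b (k+2) (m:ℕ) (k':ℕ)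
    else if (i:ℕ) < k+1 then (if (k':ℕ) = (i:ℕ) then -1 else 0)
    else (a+1) * (rep b (k+2-(k':ℕ)) : ℤ) - (if (k':ℕ) = k+1 then 1 else 0)

set_option maxHeartbeats 1600000 in
lemma Nm_mul_Vm (a b k : ℕ) (m : Fin (k+2)) : Nm a b k m * Vm b (k+2) = Pm a b k m := by
  ext i kk
  rw [Matrix.mul_apply]
  by_cases hi : (i:ℕ) = 0
  · simp only [Nm, Pm, Matrix.of_apply, hi, if_pos rfl, reduceIte]
    rw [sum_eZ_mul (k+2) ((m:ℕ)+1) (by omega) (by have := m.isLt; omega)]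
    show vent b (k+2) (((⟨(m:ℕ)+1-1, _⟩ : Fin (k+2)) : ℕ)) (kk:ℕ) = _
    simp
  · by_cases hmid : (i:ℕ) < k+1
    · -- middle row
      simp only [Nm, Pm, Matrix.of_apply, hi, if_neg hi, reduceIte, hmid, if_pos hmid]
      set r : ℕ := (i:ℕ) - 1 with hr
      have hcond : ((⟨(i:ℕ)-1, by have := i.isLt; omega⟩ : Fin (k+2-1)) : ℕ) + 1 ≤ (k+2) - 2 := by
        show (i:ℕ) - 1 + 1 ≤ k
        omega
      have hrow : ∀ j : Fin (k+2), Lmat a b (k+2) ⟨(i:ℕ)-1, by have := i.isLt; omega⟩ j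
          = b * eZ (k+2) (r+1) j - (b+1) * eZ (k+2) (r+2) j + eZ (k+2) (r+3) j := by
        intro j
        simp only [Lmat, Matrix.of_apply]
        rw [if_pos hcond]
        simp only [Pi.add_apply, Pi.sub_apply, Pi.smul_apply, smul_eq_mul, Fin.val_mk]
        rfl
      calc ∑ j : Fin (k+2), Lmat a b (k+2) ⟨(i:ℕ)-1, by have := i.isLt; omega⟩ j * Vm b (k+2) j kk
          = ∑ j : Fin (k+2), (b * (eZ (k+2) (r+1) j * Vm b (k+2) j kk)
              - (b+1) * (eZ (k+2) (r+2) j * Vm b (k+2) j kk)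
              + eZ (k+2) (r+3) j * Vm b (k+2) j kk) := by
            refine Finset.sum_congr rfl fun j _ => ?_
            rw [hrow j]; ring
        _ = b * (∑ j : Fin (k+2), eZ (k+2) (r+1) j * Vm b (k+2) j kk)
              - (b+1) * (∑ j : Fin (k+2), eZ (k+2) (r+2) j * Vm b (k+2) j kk)
              + ∑ j : Fin (k+2), eZ (k+2) (r+3) j * Vm b (k+2) j kk := by
            rw [Finset.sum_add_distrib, Finset.sum_sub_distrib, Finset.mul_sum, Finset.mul_sum]
        _ = if (kk:ℕ) = (i:ℕ) then -1 else 0 := by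
            rw [sum_eZ_mul (k+2) (r+1) (by omega) (by omega),
                sum_eZ_mul (k+2) (r+2) (by omega) (by omega),
                sum_eZ_mul (k+2) (r+3) (by omega) (by omega)]
            have g1 : r+1-1 = r := rfl
            have g2 : r+2-1 = r+1 := rfl
            have g3 : r+3-1 = r+2 := rfl
            simp only [Vm, Matrix.of_apply, Fin.val_mk, g1, g2, g3]
            rw [key_mid b (k+2) r (kk:ℕ) (by omega) kk.isLt]
            exact if_congr (by omega) rfl rfl
    · -- last row
      have hlast : (i:ℕ) = k+1 := by have := i.isLt; omega
      simp only [Nm, Pm, Matrix.of_apply, if_neg hi, if_neg hmid]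
      have hcond : ¬ (((⟨(i:ℕ)-1, by have := i.isLt; omega⟩ : Fin (k+2-1)) : ℕ) + 1 ≤ (k+2) - 2) := by
        show ¬ ((i:ℕ) - 1 + 1 ≤ k)
        omega
      have hrow : ∀ j : Fin (k+2), Lmat a b (k+2) ⟨(i:ℕ)-1, by have := i.isLt; omega⟩ j
          = (a+1) * eZ (k+2) 1 j + b * eZ (k+2) (k+1) j - (b+1) * eZ (k+2) (k+2) j := by
        intro j
        simp only [Lmat, Matrix.of_apply]
        rw [if_neg hcond]
        simp only [Pi.add_apply, Pi.sub_apply, Pi.smul_apply, smul_eq_mul]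
        norm_num
      calc ∑ j : Fin (k+2), Lmat a b (k+2) ⟨(i:ℕ)-1, by have := i.isLt; omega⟩ j * Vm b (k+2) j kk
          = ∑ j : Fin (k+2), ((a+1) * (eZ (k+2) 1 j * Vm b (k+2) j kk)
              + b * (eZ (k+2) (k+1) j * Vm b (k+2) j kk)
              - (b+1) * (eZ (k+2) (k+2) j * Vm b (k+2) j kk)) := by
            refine Finset.sum_congr rfl fun j _ => ?_
            rw [hrow j]; ring
        _ = (a+1) * (∑ j : Fin (k+2), eZ (k+2) 1 j * Vm b (k+2) j kk)
              + b * (∑ j : Fin (k+2), eZ (k+2) (k+1) j * Vm b (k+2) j kk)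
              - (b+1) * (∑ j : Fin (k+2), eZ (k+2) (k+2) j * Vm b (k+2) j kk) := by
            rw [Finset.sum_sub_distrib, Finset.sum_add_distrib, Finset.mul_sum, Finset.mul_sum,
                Finset.mul_sum]
        _ = (a+1) * (rep b (k+2-(kk:ℕ)) : ℤ) - (if (kk:ℕ) = k+1 then 1 else 0) := by
            rw [sum_eZ_mul (k+2) 1 le_rfl (by omega),
                sum_eZ_mul (k+2) (k+1) (by omega) (by omega),
                sum_eZ_mul (k+2) (k+2) (by omega) (by omega)]
            have g1 : (1:ℕ)-1 = 0 := rfl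
            have g2 : k+1-1 = k := rfl
            have g3 : k+2-1 = k+1 := rfl
            simp only [Vm, Matrix.of_apply, Fin.val_mk, g1, g2, g3]
            have h := key_last a b (k+2) (kk:ℕ) (by omega) kk.isLt
            have e1 : (k+2) - 2 = k := rfl
            have e2 : (k+2) - 1 = k+1 := rfl
            rw [e1, e2] at h
            exact h
end Aux2
section Aux3

lemma rep_zero (b : ℕ) : rep b 0 = 0 := by simp [rep]

lemma detD0 (a b k : ℕ) (m : Fin (k+2)) :
    ((Pm a b k m).submatrix (0 : Fin (k+2)).succAbove Fin.succ).det = (-1)^k * a := by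
  rw [Matrix.det_of_lowerTriangular]
  · rw [Fin.prod_univ_castSucc]
    have h1 : ∀ i : Fin k, (Pm a b k m).submatrix (0 : Fin (k+2)).succAbove Fin.succ
        i.castSucc i.castSucc = -1 := by
      intro i
      simp only [Matrix.submatrix_apply, Fin.succAbove_zero, Pm, Matrix.of_apply]
      rw [if_neg (by simp), if_pos (by simp <;> omega), if_pos (by simp)]
    have h2 : (Pm a b k m).submatrix (0 : Fin (k+2)).succAbove Fin.succ
        (Fin.last k) (Fin.last k) = a := by
      simp only [Matrix.submatrix_apply, Fin.succAbove_zero, Pm, Matrix.of_apply]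
      rw [if_neg (by simp), if_neg (by simp), if_pos (by simp)]
      have : (k+2) - (((Fin.last k).succ : Fin (k+2)):ℕ) = 1 := by simp
      rw [this, rep_one]
      push_cast
      ring
    rw [h2, Finset.prod_congr rfl (fun i _ => h1 i), Finset.prod_const]
    simp [Finset.card_univ]
  · intro i j hij
    have hij' : (i:ℕ) < (j:ℕ) := hij
    simp only [Matrix.submatrix_apply, Fin.succAbove_zero, Pm, Matrix.of_apply]
    rw [if_neg (by simp), if_pos (by simp <;> omega), if_neg (by simp <;> omega)]

lemma detD1 (a b k : ℕ) (m : Fin (k+2)) :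
    ((Pm a b k m).submatrix (Fin.last (k+1)).succAbove Fin.succ).det = 1 := by
  set R := (Pm a b k m).submatrix (Fin.last (k+1)).succAbove Fin.succ with hR
  rw [Matrix.det_succ_column R (Fin.last k)]
  have hzero : ∀ i : Fin (k+1), i ≠ 0 → R i (Fin.last k) = 0 := by
    intro i hi
    have hi' : (i:ℕ) ≠ 0 := fun h => hi (Fin.ext h)
    have hilt : (i:ℕ) < k + 1 := i.isLt
    simp only [hR, Matrix.submatrix_apply, Fin.succAbove_last, Pm, Matrix.of_apply]
    rw [if_neg (by simp [hi']), if_pos (by simp <;> omega), if_neg (by simp <;> omega)]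
  rw [Finset.sum_eq_single (0 : Fin (k+1))]
  · have hR0 : R 0 (Fin.last k) = 1 := by
      simp only [hR, Matrix.submatrix_apply, Fin.succAbove_last, Pm, Matrix.of_apply]
      rw [if_pos (by simp)]
      have e2 : (((Fin.last k).succ : Fin (k+2)):ℕ) = k+1 := by simp
      rw [e2, vent, if_pos (by have := m.isLt; omega)]
      have : k + 2 - (k+1) = 1 := by omega
      rw [this, rep_one]
      norm_num
    rw [hR0]
    have hS : (R.submatrix (0 : Fin (k+1)).succAbove (Fin.last k).succAbove).det = (-1)^k := by
      have : R.submatrix (0 : Fin (k+1)).succAbove (Fin.last k).succAbove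
          = -(1 : Matrix (Fin k) (Fin k) ℤ) := by
        ext i j
        simp only [Matrix.submatrix_apply, Fin.succAbove_zero, Fin.succAbove_last, hR,
          Pm, Matrix.of_apply]
        rw [if_neg (by simp), if_pos (by simp <;> omega)]
        by_cases hij : i = j
        · subst hij
          rw [if_pos (by simp)]
          simp [Matrix.one_apply]
        · have hvne : (i:ℕ) ≠ (j:ℕ) := fun h => hij (Fin.ext h)
          rw [if_neg (show ¬ ((j.castSucc.succ : Fin (k+2)) : ℕ) = ((i.succ.castSucc : Fin (k+2)) : ℕ) by
            simp only [Fin.val_succ, Fin.coe_castSucc]; omega)]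
          simp [Matrix.neg_apply, Matrix.one_apply, hij]
      rw [this]
      simp [Matrix.det_neg]
    rw [hS]
    simp only [Fin.val_zero, zero_add, Fin.val_last, mul_one]
    rw [← pow_add, ← two_mul, pow_mul]
    norm_num
  · intro i _ hi
    rw [hzero i hi, mul_zero, zero_mul]
  · intro h
    exact absurd (Finset.mem_univ _) h

lemma det_Pm (a b k : ℕ) (m : Fin (k+2)) :
    (Pm a b k m).det = vent b (k+2) (m:ℕ) 0 * ((-1)^k * a)
      + (-1)^(k+1) * ((a+1) * (rep b (k+2) : ℤ)) := by
  rw [Matrix.det_succ_column_zero]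
  have hsub : ({(0 : Fin (k+2)), Fin.last (k+1)} : Finset (Fin (k+2))) ⊆ Finset.univ :=
    Finset.subset_univ _
  have hzero : ∀ i : Fin (k+2), i ∈ Finset.univ →
      i ∉ ({(0 : Fin (k+2)), Fin.last (k+1)} : Finset (Fin (k+2))) →
      (-1)^(i:ℕ) * Pm a b k m i 0 * ((Pm a b k m).submatrix i.succAbove Fin.succ).det = 0 := by
    intro i _ hi
    simp only [Finset.mem_insert, Finset.mem_singleton] at hi
    push_neg at hi
    obtain ⟨h0, hl⟩ := hi
    have h0' : (i:ℕ) ≠ 0 := fun h => h0 (Fin.ext h)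
    have hl' : (i:ℕ) ≠ k+1 := fun h => hl (Fin.ext (by simp [h]))
    have : Pm a b k m i 0 = 0 := by
      simp only [Pm, Matrix.of_apply]
      rw [if_neg (by simp [h0']), if_pos (by have := i.isLt; omega), if_neg (by simp <;> omega)]
    rw [this, mul_zero, zero_mul]
  rw [← Finset.sum_subset hsub hzero, Finset.sum_pair (by
    intro h
    have : (0:ℕ) = k+1 := congrArg Fin.val h
    omega)]
  have e0 : Pm a b k m 0 0 = vent b (k+2) (m:ℕ) 0 := by
    simp [Pm]
  have el : Pm a b k m (Fin.last (k+1)) 0 = (a+1) * (rep b (k+2) : ℤ) := by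
    simp only [Pm, Matrix.of_apply]
    rw [if_neg (by simp), if_neg (by simp), if_neg (by simp)]
    simp
  rw [e0, el, detD0, detD1]
  simp only [Fin.val_zero, pow_zero, one_mul, Fin.val_last, mul_one]
  try ring

lemma det_Nm (a b k : ℕ) (m : Fin (k+2)) :
    (Nm a b k m).det = (-1)^(k+1) * ((rep b (k+2) : ℤ) + a * (rep b (m:ℕ) : ℤ)) := by
  have h1 : (Nm a b k m).det = (Pm a b k m).det := by
    rw [← Nm_mul_Vm, Matrix.det_mul, det_Vm, mul_one]
  rw [h1, det_Pm]
  by_cases hm : (m:ℕ) = 0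
  · rw [hm]
    rw [show vent b (k+2) 0 0 = (rep b (k+2) : ℤ) from by rw [vent, if_pos le_rfl]; norm_num]
    rw [rep_zero]
    rw [pow_succ]
    push_cast
    ring
  · rw [vent_ge _ _ _ _ (by omega)]
    have hsplit : rep b (k+2) = rep b (m:ℕ) + b^(m:ℕ) * rep b (k+2-(m:ℕ)) := by
      conv_lhs => rw [show k+2 = (m:ℕ) + (k+2-(m:ℕ)) by have := m.isLt; omega]
      exact rep_add b (m:ℕ) (k+2-(m:ℕ))
    have e1 : (m:ℕ) - 0 = (m:ℕ) := by omega
    rw [e1, hsplit, pow_succ]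
    push_cast
    ring

end Aux3
lemma delCol_eq (k : ℕ) (m : Fin (k+2)) (j : Fin (k+1)) :
    delCol (k+2) m j = m.succAbove j := by
  unfold delCol Fin.succAbove
  by_cases h : (j:ℕ) < (m:ℕ)
  · rw [dif_pos h, if_pos (show j.castSucc < m from h)]
    rfl
  · rw [dif_neg h, if_neg (show ¬ j.castSucc < m from h)]
    rfl

lemma neg_one_sq_pow (t : ℕ) : ((-1:ℤ))^t * ((-1:ℤ))^t = 1 := by
  rw [← pow_add, ← two_mul, pow_mul]
  norm_num

theorem stmt15 (a b n : ℕ) (ha : 0 < a) (hb : 0 < b) (hn : 1 < n) :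
    (∀ m : Fin n,
        ((Lmat a b n).submatrix id (delCol n m)).det.natAbs = aseq a b n ((m : ℕ) + 1)) ∧
      (Set.range fun m : Fin n => ((Lmat a b n).submatrix id (delCol n m)).det.natAbs) =
        aseq a b n '' Set.Icc 1 n := by
  obtain ⟨k, rfl⟩ : ∃ k, n = k + 2 := ⟨n - 2, by omega⟩
  have key : ∀ m : Fin (k+2),
      ((Lmat a b (k+2)).submatrix id (delCol (k+2) m)).det.natAbs
        = aseq a b (k+2) ((m:ℕ)+1) := by
    intro m
    have hsub : (Nm a b k m).submatrix Fin.succ (Fin.succAbove m)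
        = (Lmat a b (k+2)).submatrix id (delCol (k+2) m) := by
      ext i j
      show Nm a b k m (Fin.succ i) (m.succAbove j) = Lmat a b (k+2) (id i) (delCol (k+2) m j)
      rw [delCol_eq]
      simp only [Nm, Matrix.of_apply]
      rw [if_neg (by simp)]
      congr 1
    have hdet : (Nm a b k m).det
        = (-1:ℤ)^(m:ℕ) * ((Lmat a b (k+2)).submatrix id (delCol (k+2) m)).det := by
      rw [Matrix.det_succ_row_zero, Finset.sum_eq_single m]
      · have h00 : Nm a b k m 0 m = 1 := by
          simp only [Nm, Matrix.of_apply]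
          rw [if_pos (show ((0 : Fin (k+2)):ℕ) = 0 from rfl)]
          show (if (m:ℕ) + 1 = (m:ℕ)+1 then (1:ℤ) else 0) = 1
          simp
        rw [h00, mul_one, hsub]
        try rfl
      · intro j _ hj
        have hz : Nm a b k m 0 j = 0 := by
          simp only [Nm, Matrix.of_apply]
          rw [if_pos (show ((0 : Fin (k+2)):ℕ) = 0 from rfl)]
          show (if (j:ℕ) + 1 = (m:ℕ)+1 then (1:ℤ) else 0) = 0
          rw [if_neg (fun h => hj (Fin.ext (by omega)))]
        rw [hz, mul_zero, zero_mul]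
      · intro h
        exact absurd (Finset.mem_univ _) h
    have hval := det_Nm a b k m
    rw [hdet] at hval
    have hX : ((Lmat a b (k+2)).submatrix id (delCol (k+2) m)).det
        = (-1:ℤ)^(m:ℕ) * ((-1:ℤ)^(k+1) * ((rep b (k+2) : ℤ) + a * (rep b (m:ℕ) : ℤ))) := by
      calc ((Lmat a b (k+2)).submatrix id (delCol (k+2) m)).det
          = ((-1:ℤ)^(m:ℕ) * (-1:ℤ)^(m:ℕ))
            * ((Lmat a b (k+2)).submatrix id (delCol (k+2) m)).det := by
            rw [neg_one_sq_pow, one_mul]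
        _ = (-1:ℤ)^(m:ℕ) * ((-1:ℤ)^(m:ℕ)
            * ((Lmat a b (k+2)).submatrix id (delCol (k+2) m)).det) := by ring
        _ = _ := by rw [hval]
    rw [hX, Int.natAbs_mul, Int.natAbs_mul]
    have hone : ∀ t : ℕ, ((-1:ℤ)^t).natAbs = 1 := by
      intro t
      rw [Int.natAbs_pow]
      norm_num
    rw [hone, hone, one_mul, one_mul]
    have hcast : ((rep b (k+2) : ℤ) + (a:ℤ) * (rep b (m:ℕ) : ℤ))
        = ((rep b (k+2) + a * rep b (m:ℕ) : ℕ) : ℤ) := by push_cast; ring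
    rw [hcast, Int.natAbs_natCast]
    simp [aseq]
  refine ⟨key, ?_⟩
  ext x
  simp only [Set.mem_range, Set.mem_image, Set.mem_Icc]
  constructor
  · rintro ⟨m, rfl⟩
    exact ⟨(m:ℕ)+1, ⟨by omega, by have := m.isLt; omega⟩, (key m).symm⟩
  · rintro ⟨t, ⟨ht1, ht2⟩, rfl⟩
    refine ⟨⟨t-1, by omega⟩, ?_⟩
    rw [key ⟨t-1, by omega⟩]
    congr 1
    show (t-1) + 1 = t
    omega
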